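/- arXiv:2209.15606 — 5 statements merged into one kernel-verified Lean document; each statement's English description precedes it below -/
import Mathlib

section
/- For an adjunction L ⊣ R between abelian categories with counit ε, the following are equivalent: (1) the adjunction is precomonadic; (2) ε_X is an epimorphism for every object X; (3) R is faithful. -/
open CategoryTheory Category Limits

universe v₁ v₂ u₁ u₂

variable {A : Type u₁} [Category.{v₁} A] {B : Type u₂} [Category.{v₂} B]

/-- An adjunction `L ⊣ R` is *precomonadic* if for every object `X` the diagram
`LRLR(X) ⇉ LR(X) → X`, with parallel maps `LR(ε_X)` and `ε_{LR(X)}` and with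
`ε_X` as the projection, is a coequalizer. -/
def Precomonadic {L : A ⥤ B} {R : B ⥤ A} (adj : L ⊣ R) : Prop :=
  ∀ X : B, Nonempty (IsColimit (Cofork.ofπ
    (f := L.map (R.map (adj.counit.app X)))
    (g := adj.counit.app (L.obj (R.obj X)))
    (adj.counit.app X)
    (by simpa using adj.counit.naturality (adj.counit.app X))))

/-- For an adjunction `L ⊣ R` between abelian categories, the following are equivalent:
(1) the adjunction is precomonadic; (2) `ε_X` is an epimorphism for every `X`;
(3) `R` is faithful. -/
theorem precomonadic_tfae [Abelian A] [Abelian B] {L : A ⥤ B} {R : B ⥤ A}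
    (adj : L ⊣ R) :
    List.TFAE [Precomonadic adj, ∀ X : B, Epi (adj.counit.app X), R.Faithful] := by
  tfae_have 1 → 2 := by
    intro h X
    exact epi_of_isColimit_cofork (h X).some
  tfae_have 2 → 3 := by
    intro h
    exact adj.faithful_R_of_epi_counit_app
  tfae_have 3 → 2 := by
    intro h X
    constructor
    intro Y f g hfg
    apply R.map_injective
    have := congrArg R.map hfg
    simp only [R.map_comp] at this
    have hs : adj.unit.app (R.obj X) ≫ R.map (adj.counit.app X) = 𝟙 _ :=
      adj.right_triangle_components X
    calc R.map f = adj.unit.app (R.obj X) ≫ R.map (adj.counit.app X) ≫ R.map f := by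
          rw [← assoc, hs, id_comp]
      _ = adj.unit.app (R.obj X) ≫ R.map (adj.counit.app X) ≫ R.map g := by rw [this]
      _ = R.map g := by rw [← assoc, hs, id_comp]
  tfae_have 2 → 1 := by
    intro h X
    haveI := h
    have hdesc : ∀ s : Cofork (L.map (R.map (adj.counit.app X)))
        (adj.counit.app (L.obj (R.obj X))), kernel.ι (adj.counit.app X) ≫ s.π = 0 := by
      intro s
      -- need : kernel.ι (ε_X) ≫ s.π = 0
      have hK : kernel.ι (adj.counit.app X) ≫ adj.counit.app X = 0 :=
        kernel.condition _
      have hcond : L.map (R.map (adj.counit.app X)) ≫ s.π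
          = adj.counit.app (L.obj (R.obj X)) ≫ s.π := s.condition
      have hnat : L.map (R.map (kernel.ι (adj.counit.app X)))
            ≫ adj.counit.app (L.obj (R.obj X))
          = adj.counit.app (kernel (adj.counit.app X))
            ≫ kernel.ι (adj.counit.app X) := by
        simpa using adj.counit.naturality (kernel.ι (adj.counit.app X))
      have h0 : adj.counit.app (kernel (adj.counit.app X))
          ≫ kernel.ι (adj.counit.app X) ≫ s.π = 0 := by
        haveI := adj.isRightAdjoint
        haveI := adj.isLeftAdjoint
        rw [← assoc, ← hnat, assoc, ← hcond, ← assoc, ← L.map_comp, ← R.map_comp, hK,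
          R.map_zero, L.map_zero, zero_comp]
      haveI : Epi (adj.counit.app (kernel (adj.counit.app X))) := h _
      rwa [← cancel_epi (adj.counit.app (kernel (adj.counit.app X))), comp_zero]
    refine ⟨Cofork.IsColimit.mk _
      (fun s => Abelian.epiDesc (adj.counit.app X) s.π (hdesc s))
      (fun s => Abelian.comp_epiDesc (adj.counit.app X) s.π (hdesc s)) (fun s m hm => ?_)⟩
    haveI : Epi (adj.counit.app X) := h X
    have hm' : adj.counit.app X ≫ m = s.π := hm
    exact (@cancel_epi _ _ _ _ s.pt (adj.counit.app X) (h X) m _).1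
      (by rw [hm', Abelian.comp_epiDesc])
  tfae_finish
end

section
/- In an abelian category, an adjunction L ⊣ R is precomonadic if and only if its right adjoint R is faithful. -/
open CategoryTheory Category Limits

universe v₁ v₂ u₁ u₂

variable {A : Type u₁} [Category.{v₁} A] {B : Type u₂} [Category.{v₂} B]

/-- In an abelian category, an adjunction `L ⊣ R` is precomonadic if and only if
its right adjoint `R` is faithful. -/
theorem precomonadic_iff_faithful [Abelian A] [Abelian B] {L : A ⥤ B} {R : B ⥤ A}
    (adj : L ⊣ R) :
    Precomonadic adj ↔ R.Faithful := by
  have hL : L.IsLeftAdjoint := ⟨R, ⟨adj⟩⟩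
  have hRadj : R.IsRightAdjoint := ⟨L, ⟨adj⟩⟩
  constructor
  · intro h
    -- each counit component is epi, hence R is faithful
    have hepi : ∀ X : B, Epi (adj.counit.app X) := by
      intro X
      obtain ⟨hc⟩ := h X
      constructor
      intro W u v huv
      exact Cofork.IsColimit.hom_ext hc huv
    exact ⟨fun {X Y f g} hfg => by
      have h1 := adj.counit.naturality f
      have h2 := adj.counit.naturality g
      simp only [Functor.comp_map, Functor.id_map] at h1 h2
      have heq : adj.counit.app X ≫ f = adj.counit.app X ≫ g := by
        rw [← h1, ← h2, hfg]
      exact (cancel_epi (adj.counit.app X)).1 heq⟩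
  · intro hR
    intro X
    have hepi : ∀ Y : B, Epi (adj.counit.app Y) := by
      intro Y
      have : Epi (R.map (adj.counit.app Y)) :=
        ⟨fun u v huv => by
          have := congrArg (fun t => adj.unit.app (R.obj Y) ≫ t) huv
          simpa [adj.right_triangle_components] using this⟩
      exact R.epi_of_epi_map this
    have _ : Epi (adj.counit.app X) := hepi X
    set k := kernel.ι (adj.counit.app X) with hk
    -- key: for any h with (LRε - ε_{LR}) ≫ h = 0, k ≫ h = 0
    have key : ∀ {W : B} (m : L.obj (R.obj X) ⟶ W),
        L.map (R.map (adj.counit.app X)) ≫ m = adj.counit.app (L.obj (R.obj X)) ≫ m →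
        k ≫ m = 0 := by
      intro W m hm
      have hnat : L.map (R.map k) ≫ adj.counit.app (L.obj (R.obj X))
          = adj.counit.app (kernel (adj.counit.app X)) ≫ k :=
        adj.counit.naturality k
      have hzero : L.map (R.map k) ≫ L.map (R.map (adj.counit.app X)) = 0 := by
        rw [← L.map_comp, ← R.map_comp, kernel.condition, R.map_zero, L.map_zero]
      have h0 : adj.counit.app (kernel (adj.counit.app X)) ≫ (k ≫ m) = 0 := by
        rw [← Category.assoc, ← hnat, Category.assoc, ← hm, ← Category.assoc, hzero,
          zero_comp]
      exact (cancel_epi (adj.counit.app (kernel (adj.counit.app X)))).1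
        (by rw [h0, comp_zero])
    refine ⟨Cofork.IsColimit.mk _ (fun s => Abelian.epiDesc (adj.counit.app X) s.π
      (key s.π s.condition)) (fun s => Abelian.comp_epiDesc (adj.counit.app X) s.π
        (key s.π s.condition)) ?_⟩
    intro s m hm
    simp only [Cofork.π_ofπ] at hm
    rw [← cancel_epi (adj.counit.app X)]
    rw [Abelian.comp_epiDesc]
    exact hm
end

section
/- Any monoidal adjunction between rigid monoidal categories is a coHopf adjunction, i.e., the coHopf operators h^l_{X,Y} : R(X) ⊗ Y → R(X ⊗ L(Y)) and h^r_{X,Y} : X ⊗ R(Y) → R(L(X) ⊗ Y) are invertible. -/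
open CategoryTheory Category MonoidalCategory Functor
open CategoryTheory.Functor.LaxMonoidal

universe v₁ v₂ u₁ u₂

section Aux

open CategoryTheory.Functor.OplaxMonoidal

variable {C : Type u₁} [Category.{v₁} C] [MonoidalCategory C]
variable {D : Type u₂} [Category.{v₂} D] [MonoidalCategory D]

/-- A strong monoidal functor sends exact pairings to exact pairings. -/
def mapExactPairingAux (F : C ⥤ D) [F.Monoidal] (X Y : C) [ExactPairing X Y] :
    ExactPairing (F.obj X) (F.obj Y) where
  coevaluation' := ε F ≫ F.map (η_ X Y) ≫ δ F X Y
  evaluation' := μ F Y X ≫ F.map (ε_ X Y) ≫ η F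
  coevaluation_evaluation' := by
    have assoc' : (α_ (F.obj Y) (F.obj X) (F.obj Y)).inv ≫ μ F Y X ▷ F.obj Y =
        F.obj Y ◁ μ F X Y ≫ μ F Y (X ⊗ Y) ≫ F.map (α_ Y X Y).inv ≫ δ F (Y ⊗ X) Y := by
      rw [← cancel_mono (μ F (Y ⊗ X) Y)]
      simp only [assoc, Functor.Monoidal.δ_μ, comp_id]
      exact (LaxMonoidal.associativity_inv F Y X Y).symm
    calc F.obj Y ◁ (ε F ≫ F.map (η_ X Y) ≫ δ F X Y) ≫ (α_ _ _ _).inv ≫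
          (μ F Y X ≫ F.map (ε_ X Y) ≫ η F) ▷ F.obj Y
        = F.obj Y ◁ ε F ≫ F.obj Y ◁ F.map (η_ X Y) ≫ F.obj Y ◁ δ F X Y ≫
            ((α_ _ _ _).inv ≫ μ F Y X ▷ F.obj Y) ≫
            F.map (ε_ X Y) ▷ F.obj Y ≫ η F ▷ F.obj Y := by
          try dsimp only [Functor.comp_obj, Functor.id_obj]
          simp only [MonoidalCategory.whiskerLeft_comp, comp_whiskerRight, assoc]
      _ = F.obj Y ◁ ε F ≫ F.obj Y ◁ F.map (η_ X Y) ≫ μ F Y (X ⊗ Y) ≫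
            F.map (α_ Y X Y).inv ≫ δ F (Y ⊗ X) Y ≫
            F.map (ε_ X Y) ▷ F.obj Y ≫ η F ▷ F.obj Y := by
          try dsimp only [Functor.comp_obj, Functor.id_obj]
          rw [assoc']
          simp only [Functor.Monoidal.whiskerLeft_δ_μ_assoc, assoc]
      _ = F.obj Y ◁ ε F ≫ μ F Y (𝟙_ C) ≫ F.map (Y ◁ η_ X Y) ≫
            F.map (α_ Y X Y).inv ≫ F.map (ε_ X Y ▷ Y) ≫ δ F (𝟙_ C) Y ≫ η F ▷ F.obj Y := by
          try dsimp only [Functor.comp_obj, Functor.id_obj]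
          rw [μ_natural_right_assoc, δ_natural_left_assoc F (ε_ X Y) Y]
      _ = F.obj Y ◁ ε F ≫ μ F Y (𝟙_ C) ≫ F.map (ρ_ Y).hom ≫ F.map (λ_ Y).inv ≫
            δ F (𝟙_ C) Y ≫ η F ▷ F.obj Y := by
          try dsimp only [Functor.comp_obj, Functor.id_obj]
          simp only [← F.map_comp_assoc]
          rw [ExactPairing.coevaluation_evaluation]
      _ = (ρ_ (F.obj Y)).hom ≫ (λ_ (F.obj Y)).inv := by
          try dsimp only [Functor.comp_obj, Functor.id_obj]
          rw [← LaxMonoidal.right_unitality_assoc, ← OplaxMonoidal.left_unitality]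
  evaluation_coevaluation' := by
    have assoc' : (α_ (F.obj X) (F.obj Y) (F.obj X)).hom ≫ F.obj X ◁ μ F Y X =
        μ F X Y ▷ F.obj X ≫ μ F (X ⊗ Y) X ≫ F.map (α_ X Y X).hom ≫ δ F X (Y ⊗ X) := by
      rw [← cancel_mono (μ F X (Y ⊗ X))]
      simp only [assoc, Functor.Monoidal.δ_μ, comp_id]
      exact (LaxMonoidal.associativity F X Y X).symm
    calc (ε F ≫ F.map (η_ X Y) ≫ δ F X Y) ▷ F.obj X ≫ (α_ _ _ _).hom ≫
          F.obj X ◁ (μ F Y X ≫ F.map (ε_ X Y) ≫ η F)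
        = ε F ▷ F.obj X ≫ F.map (η_ X Y) ▷ F.obj X ≫ δ F X Y ▷ F.obj X ≫
            ((α_ _ _ _).hom ≫ F.obj X ◁ μ F Y X) ≫
            F.obj X ◁ F.map (ε_ X Y) ≫ F.obj X ◁ η F := by
          try dsimp only [Functor.comp_obj, Functor.id_obj]
          simp only [MonoidalCategory.whiskerLeft_comp, comp_whiskerRight, assoc]
      _ = ε F ▷ F.obj X ≫ F.map (η_ X Y) ▷ F.obj X ≫ μ F (X ⊗ Y) X ≫
            F.map (α_ X Y X).hom ≫ δ F X (Y ⊗ X) ≫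
            F.obj X ◁ F.map (ε_ X Y) ≫ F.obj X ◁ η F := by
          try dsimp only [Functor.comp_obj, Functor.id_obj]
          rw [assoc']
          simp only [Functor.Monoidal.whiskerRight_δ_μ_assoc, assoc]
      _ = ε F ▷ F.obj X ≫ μ F (𝟙_ C) X ≫ F.map (η_ X Y ▷ X) ≫
            F.map (α_ X Y X).hom ≫ F.map (X ◁ ε_ X Y) ≫ δ F X (𝟙_ C) ≫ F.obj X ◁ η F := by
          try dsimp only [Functor.comp_obj, Functor.id_obj]
          rw [μ_natural_left_assoc, δ_natural_right_assoc F X (ε_ X Y)]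
      _ = ε F ▷ F.obj X ≫ μ F (𝟙_ C) X ≫ F.map (λ_ X).hom ≫ F.map (ρ_ X).inv ≫
            δ F X (𝟙_ C) ≫ F.obj X ◁ η F := by
          try dsimp only [Functor.comp_obj, Functor.id_obj]
          simp only [← F.map_comp_assoc]
          rw [ExactPairing.evaluation_coevaluation]
      _ = (λ_ (F.obj X)).hom ≫ (ρ_ (F.obj X)).inv := by
          try dsimp only [Functor.comp_obj, Functor.id_obj]
          rw [← LaxMonoidal.left_unitality_assoc, ← OplaxMonoidal.right_unitality]

/-- Coherence + zigzag identity, `coevaluation_evaluation` version. -/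
lemma coh1 (A B P : C) [ExactPairing P B] :
    (ρ_ (A ⊗ B)).inv ≫ (A ⊗ B) ◁ η_ P B ≫ (α_ (A ⊗ B) P B).inv ≫
      ((α_ A B P).hom ≫ A ◁ ε_ P B ≫ (ρ_ A).hom) ▷ B = 𝟙 (A ⊗ B) := by
  calc _ = 𝟙 _ ⊗≫ A ◁ (B ◁ η_ P B ≫ (α_ B P B).inv ≫ ε_ P B ▷ B) ⊗≫ 𝟙 _ := by
        monoidal
    _ = 𝟙 _ ⊗≫ A ◁ ((ρ_ B).hom ≫ (λ_ B).inv) ⊗≫ 𝟙 _ := by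
        rw [ExactPairing.coevaluation_evaluation]
    _ = 𝟙 (A ⊗ B) := by monoidal

/-- Coherence + zigzag identity, `evaluation_coevaluation` version. -/
lemma coh2 (A B P : C) [ExactPairing B P] :
    (λ_ (B ⊗ A)).inv ≫ η_ B P ▷ (B ⊗ A) ≫ (α_ B P (B ⊗ A)).hom ≫
      B ◁ ((α_ P B A).inv ≫ ε_ B P ▷ A ≫ (λ_ A).hom) = 𝟙 (B ⊗ A) := by
  calc _ = 𝟙 _ ⊗≫ (η_ B P ▷ B ≫ (α_ B P B).hom ≫ B ◁ ε_ B P) ▷ A ⊗≫ 𝟙 _ := by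
        monoidal
    _ = 𝟙 _ ⊗≫ ((λ_ B).hom ≫ (ρ_ B).inv) ▷ A ⊗≫ 𝟙 _ := by
        rw [ExactPairing.evaluation_coevaluation]
    _ = 𝟙 (B ⊗ A) := by monoidal

variable (L : C ⥤ D) (R : D ⥤ C) (adj : L ⊣ R)
    [L.Monoidal] [R.LaxMonoidal] [adj.IsMonoidal]

lemma unit_app_unit_eq : adj.unit.app (𝟙_ C) = ε R ≫ R.map (ε L) := by
  rw [← adj.unit_app_unit_comp_map_η, assoc, ← R.map_comp, Functor.Monoidal.η_ε,
    R.map_id]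
  simp

lemma inner_ev (A B : C) (e : A ⊗ B ⟶ 𝟙_ C) :
    adj.unit.app A ▷ B ≫ R.obj (L.obj A) ◁ adj.unit.app B ≫ μ R (L.obj A) (L.obj B) ≫
      R.map (μ L A B ≫ L.map e ≫ η L) = e ≫ ε R := by
  have h1 : adj.unit.app A ▷ B ≫ R.obj (L.obj A) ◁ adj.unit.app B =
      adj.unit.app A ⊗ₘ adj.unit.app B := (MonoidalCategory.tensorHom_def _ _).symm
  rw [reassoc_of% h1, ← adj.unit_app_tensor_comp_map_δ_assoc]
  simp only [R.map_comp]
  rw [Functor.Monoidal.map_δ_μ_assoc, adj.unit_naturality_assoc,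
    adj.unit_app_unit_comp_map_η]

lemma inner_coev (A B : C) (c : 𝟙_ C ⟶ A ⊗ B) :
    c ≫ (adj.unit.app A ▷ B ≫ R.obj (L.obj A) ◁ adj.unit.app B ≫ μ R (L.obj A) (L.obj B)) =
      ε R ≫ R.map (ε L ≫ L.map c ≫ δ L A B) := by
  have h1 : adj.unit.app A ▷ B ≫ R.obj (L.obj A) ◁ adj.unit.app B =
      adj.unit.app A ⊗ₘ adj.unit.app B := (MonoidalCategory.tensorHom_def _ _).symm
  rw [reassoc_of% h1, ← adj.unit_app_tensor_comp_map_δ]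
  rw [← adj.unit_naturality_assoc, unit_app_unit_eq L R adj]
  simp only [R.map_comp, assoc]

end Aux

section Main

open CategoryTheory.Functor.OplaxMonoidal

variable {C : Type u₁} [Category.{v₁} C] [MonoidalCategory C]
variable {D : Type u₂} [Category.{v₂} D] [MonoidalCategory D]
variable (L : C ⥤ D) (R : D ⥤ C) (adj : L ⊣ R)
    [L.Monoidal] [R.LaxMonoidal] [adj.IsMonoidal]

lemma isIso_left_coHopf (X : D) (Y Z : C) [ExactPairing Z Y] :
    IsIso (R.obj X ◁ adj.unit.app Y ≫ μ R X (L.obj Y)) := by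
  letI : ExactPairing (L.obj Z) (L.obj Y) := mapExactPairingAux L Z Y
  have hev : ε_ (L.obj Z) (L.obj Y) = μ L Y Z ≫ L.map (ε_ Z Y) ≫ η L := rfl
  have hcoev : η_ (L.obj Z) (L.obj Y) = ε L ≫ L.map (η_ Z Y) ≫ δ L Z Y := rfl
  -- the candidate inverse
  set w : (X ⊗ L.obj Y) ⊗ L.obj Z ⟶ X :=
    (α_ X (L.obj Y) (L.obj Z)).hom ≫ X ◁ ε_ (L.obj Z) (L.obj Y) ≫ (ρ_ X).hom with hw
  set f : R.obj (X ⊗ L.obj Y) ⊗ Z ⟶ R.obj X :=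
    R.obj (X ⊗ L.obj Y) ◁ adj.unit.app Z ≫ μ R (X ⊗ L.obj Y) (L.obj Z) ≫ R.map w with hf
  have keyA : (R.obj X ◁ adj.unit.app Y ≫ μ R X (L.obj Y)) ▷ Z ≫ f =
      (α_ (R.obj X) Y Z).hom ≫ R.obj X ◁ ε_ Z Y ≫ (ρ_ (R.obj X)).hom := by
    calc (R.obj X ◁ adj.unit.app Y ≫ μ R X (L.obj Y)) ▷ Z ≫ f
        = (R.obj X ◁ adj.unit.app Y) ▷ Z ≫ (R.obj X ⊗ R.obj (L.obj Y)) ◁ adj.unit.app Z ≫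
            (μ R X (L.obj Y) ▷ R.obj (L.obj Z) ≫ μ R (X ⊗ L.obj Y) (L.obj Z) ≫
              R.map (α_ X (L.obj Y) (L.obj Z)).hom) ≫
            R.map (X ◁ ε_ (L.obj Z) (L.obj Y)) ≫ R.map (ρ_ X).hom := by
          try dsimp only [Functor.comp_obj, Functor.id_obj]
          simp only [hf, hw, comp_whiskerRight, assoc, R.map_comp]
          rw [← whisker_exchange_assoc]
          try dsimp only [Functor.comp_obj, Functor.id_obj]
      _ = (R.obj X ◁ adj.unit.app Y) ▷ Z ≫ (R.obj X ⊗ R.obj (L.obj Y)) ◁ adj.unit.app Z ≫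
            (α_ (R.obj X) (R.obj (L.obj Y)) (R.obj (L.obj Z))).hom ≫
            R.obj X ◁ μ R (L.obj Y) (L.obj Z) ≫
            (μ R X (L.obj Y ⊗ L.obj Z) ≫ R.map (X ◁ ε_ (L.obj Z) (L.obj Y))) ≫
            R.map (ρ_ X).hom := by
          try dsimp only [Functor.comp_obj, Functor.id_obj]
          rw [LaxMonoidal.associativity]
          simp only [assoc]
      _ = (α_ (R.obj X) Y Z).hom ≫
            R.obj X ◁ (adj.unit.app Y ▷ Z ≫ R.obj (L.obj Y) ◁ adj.unit.app Z ≫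
              μ R (L.obj Y) (L.obj Z) ≫ R.map (ε_ (L.obj Z) (L.obj Y))) ≫
            μ R X (𝟙_ D) ≫ R.map (ρ_ X).hom := by
          try dsimp only [Functor.comp_obj, Functor.id_obj]
          rw [← μ_natural_right]
          rw [associator_naturality_right_assoc, associator_naturality_middle_assoc]
          simp only [MonoidalCategory.whiskerLeft_comp, assoc]
      _ = (α_ (R.obj X) Y Z).hom ≫ R.obj X ◁ (ε_ Z Y ≫ ε R) ≫
            μ R X (𝟙_ D) ≫ R.map (ρ_ X).hom := by
          try dsimp only [Functor.comp_obj, Functor.id_obj]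
          rw [hev, inner_ev L R adj Y Z (ε_ Z Y)]
      _ = (α_ (R.obj X) Y Z).hom ≫ R.obj X ◁ ε_ Z Y ≫ (ρ_ (R.obj X)).hom := by
          try dsimp only [Functor.comp_obj, Functor.id_obj]
          simp only [MonoidalCategory.whiskerLeft_comp, assoc]
          rw [← LaxMonoidal.right_unitality]
  refine ⟨(ρ_ _).inv ≫ _ ◁ η_ Z Y ≫ (α_ _ Z Y).inv ≫ f ▷ Y, ?_, ?_⟩
  · calc (R.obj X ◁ adj.unit.app Y ≫ μ R X (L.obj Y)) ≫
          ((ρ_ _).inv ≫ _ ◁ η_ Z Y ≫ (α_ _ Z Y).inv ≫ f ▷ Y)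
        = (ρ_ (R.obj X ⊗ Y)).inv ≫ (R.obj X ⊗ Y) ◁ η_ Z Y ≫ (α_ (R.obj X ⊗ Y) Z Y).inv ≫
            (((R.obj X ◁ adj.unit.app Y ≫ μ R X (L.obj Y)) ▷ Z ≫ f) ▷ Y) := by
          try dsimp only [Functor.comp_obj, Functor.id_obj]
          rw [rightUnitor_inv_naturality_assoc, ← whisker_exchange_assoc,
            associator_inv_naturality_left_assoc]
          simp only [comp_whiskerRight, assoc]
      _ = (ρ_ (R.obj X ⊗ Y)).inv ≫ (R.obj X ⊗ Y) ◁ η_ Z Y ≫ (α_ (R.obj X ⊗ Y) Z Y).inv ≫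
            (((α_ (R.obj X) Y Z).hom ≫ R.obj X ◁ ε_ Z Y ≫ (ρ_ (R.obj X)).hom) ▷ Y) := by
          try dsimp only [Functor.comp_obj, Functor.id_obj]
          rw [keyA]
      _ = 𝟙 _ := coh1 (R.obj X) Y Z
  · have assocμ : μ R (X ⊗ L.obj Y) (L.obj Z) ▷ R.obj (L.obj Y) ≫
        μ R ((X ⊗ L.obj Y) ⊗ L.obj Z) (L.obj Y) =
        (α_ _ _ _).hom ≫ R.obj (X ⊗ L.obj Y) ◁ μ R (L.obj Z) (L.obj Y) ≫
          μ R (X ⊗ L.obj Y) (L.obj Z ⊗ L.obj Y) ≫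
          R.map (α_ (X ⊗ L.obj Y) (L.obj Z) (L.obj Y)).inv := by
      rw [← cancel_mono (R.map (α_ (X ⊗ L.obj Y) (L.obj Z) (L.obj Y)).hom)]
      simp only [assoc, ← R.map_comp, Iso.inv_hom_id, R.map_id, comp_id]
      exact LaxMonoidal.associativity R _ _ _
    calc ((ρ_ _).inv ≫ _ ◁ η_ Z Y ≫ (α_ _ Z Y).inv ≫ f ▷ Y) ≫
          (R.obj X ◁ adj.unit.app Y ≫ μ R X (L.obj Y))
        = (ρ_ _).inv ≫ _ ◁ η_ Z Y ≫ (α_ _ Z Y).inv ≫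
            (R.obj (X ⊗ L.obj Y) ⊗ Z) ◁ adj.unit.app Y ≫
            (R.obj (X ⊗ L.obj Y) ◁ adj.unit.app Z) ▷ R.obj (L.obj Y) ≫
            (μ R (X ⊗ L.obj Y) (L.obj Z) ▷ R.obj (L.obj Y) ≫
              μ R ((X ⊗ L.obj Y) ⊗ L.obj Z) (L.obj Y)) ≫
            R.map (w ▷ L.obj Y) := by
          try dsimp only [Functor.comp_obj, Functor.id_obj]
          rw [assoc, assoc, assoc, ← whisker_exchange_assoc]
          simp only [hf, comp_whiskerRight, assoc]
          rw [μ_natural_left]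
      _ = (ρ_ _).inv ≫
            R.obj (X ⊗ L.obj Y) ◁ (η_ Z Y ≫ (adj.unit.app Z ▷ Y ≫
              R.obj (L.obj Z) ◁ adj.unit.app Y ≫ μ R (L.obj Z) (L.obj Y))) ≫
            μ R (X ⊗ L.obj Y) (L.obj Z ⊗ L.obj Y) ≫
            R.map ((α_ (X ⊗ L.obj Y) (L.obj Z) (L.obj Y)).inv ≫ w ▷ L.obj Y) := by
          try dsimp only [Functor.comp_obj, Functor.id_obj]
          rw [assocμ]
          rw [whisker_exchange_assoc, ← associator_inv_naturality_middle_assoc,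
            ← associator_inv_naturality_right_assoc]
          simp only [MonoidalCategory.whiskerLeft_comp, assoc, Iso.inv_hom_id_assoc,
            R.map_comp]
      _ = (ρ_ _).inv ≫ R.obj (X ⊗ L.obj Y) ◁ ε R ≫
            R.obj (X ⊗ L.obj Y) ◁ R.map (η_ (L.obj Z) (L.obj Y)) ≫
            μ R (X ⊗ L.obj Y) (L.obj Z ⊗ L.obj Y) ≫
            R.map ((α_ (X ⊗ L.obj Y) (L.obj Z) (L.obj Y)).inv ≫ w ▷ L.obj Y) := by
          try dsimp only [Functor.comp_obj, Functor.id_obj]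
          rw [inner_coev L R adj Z Y (η_ Z Y), ← hcoev]
          simp only [MonoidalCategory.whiskerLeft_comp, assoc]
      _ = R.map ((ρ_ (X ⊗ L.obj Y)).inv ≫ (X ⊗ L.obj Y) ◁ η_ (L.obj Z) (L.obj Y) ≫
            (α_ (X ⊗ L.obj Y) (L.obj Z) (L.obj Y)).inv ≫ w ▷ L.obj Y) := by
          try dsimp only [Functor.comp_obj, Functor.id_obj]
          rw [μ_natural_right_assoc]
          rw [LaxMonoidal.right_unitality_inv_assoc]
          simp only [R.map_comp, assoc]
      _ = 𝟙 _ := by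
          try dsimp only [Functor.comp_obj, Functor.id_obj]
          rw [hw]
          rw [coh1 X (L.obj Y) (L.obj Z), R.map_id]

lemma isIso_right_coHopf (X Z : C) (Y : D) [ExactPairing X Z] :
    IsIso (adj.unit.app X ▷ R.obj Y ≫ μ R (L.obj X) Y) := by
  letI : ExactPairing (L.obj X) (L.obj Z) := mapExactPairingAux L X Z
  have hev : ε_ (L.obj X) (L.obj Z) = μ L Z X ≫ L.map (ε_ X Z) ≫ η L := rfl
  have hcoev : η_ (L.obj X) (L.obj Z) = ε L ≫ L.map (η_ X Z) ≫ δ L X Z := rfl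
  set w : L.obj Z ⊗ (L.obj X ⊗ Y) ⟶ Y :=
    (α_ (L.obj Z) (L.obj X) Y).inv ≫ ε_ (L.obj X) (L.obj Z) ▷ Y ≫ (λ_ Y).hom with hw
  set f : Z ⊗ R.obj (L.obj X ⊗ Y) ⟶ R.obj Y :=
    adj.unit.app Z ▷ R.obj (L.obj X ⊗ Y) ≫ μ R (L.obj Z) (L.obj X ⊗ Y) ≫ R.map w with hf
  have keyA : Z ◁ (adj.unit.app X ▷ R.obj Y ≫ μ R (L.obj X) Y) ≫ f =
      (α_ Z X (R.obj Y)).inv ≫ ε_ X Z ▷ R.obj Y ≫ (λ_ (R.obj Y)).hom := by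
    calc Z ◁ (adj.unit.app X ▷ R.obj Y ≫ μ R (L.obj X) Y) ≫ f
        = Z ◁ (adj.unit.app X ▷ R.obj Y) ≫
            adj.unit.app Z ▷ (R.obj (L.obj X) ⊗ R.obj Y) ≫
            (R.obj (L.obj Z) ◁ μ R (L.obj X) Y ≫ μ R (L.obj Z) (L.obj X ⊗ Y) ≫
              R.map (α_ (L.obj Z) (L.obj X) Y).inv) ≫
            R.map (ε_ (L.obj X) (L.obj Z) ▷ Y) ≫ R.map (λ_ Y).hom := by
          try dsimp only [Functor.comp_obj, Functor.id_obj]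
          simp only [hf, hw, MonoidalCategory.whiskerLeft_comp, assoc, R.map_comp]
          rw [whisker_exchange_assoc]
          try dsimp only [Functor.comp_obj, Functor.id_obj]
      _ = Z ◁ (adj.unit.app X ▷ R.obj Y) ≫
            adj.unit.app Z ▷ (R.obj (L.obj X) ⊗ R.obj Y) ≫
            (α_ (R.obj (L.obj Z)) (R.obj (L.obj X)) (R.obj Y)).inv ≫
            μ R (L.obj Z) (L.obj X) ▷ R.obj Y ≫
            (μ R (L.obj Z ⊗ L.obj X) Y ≫ R.map (ε_ (L.obj X) (L.obj Z) ▷ Y)) ≫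
            R.map (λ_ Y).hom := by
          try dsimp only [Functor.comp_obj, Functor.id_obj]
          rw [LaxMonoidal.associativity_inv]
          simp only [assoc]
      _ = (α_ Z X (R.obj Y)).inv ≫
            (adj.unit.app Z ▷ X ≫ R.obj (L.obj Z) ◁ adj.unit.app X ≫
              μ R (L.obj Z) (L.obj X) ≫ R.map (ε_ (L.obj X) (L.obj Z))) ▷ R.obj Y ≫
            μ R (𝟙_ D) Y ≫ R.map (λ_ Y).hom := by
          try dsimp only [Functor.comp_obj, Functor.id_obj]
          rw [← μ_natural_left]
          rw [associator_inv_naturality_left_assoc, associator_inv_naturality_middle_assoc]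
          simp only [comp_whiskerRight, assoc]
          have hex : Z ◁ adj.unit.app X ≫ adj.unit.app Z ▷ R.obj (L.obj X) =
              adj.unit.app Z ▷ X ≫ R.obj (L.obj Z) ◁ adj.unit.app X :=
            whisker_exchange _ _
          simp only [← comp_whiskerRight_assoc]
          rw [reassoc_of% hex]
      _ = (α_ Z X (R.obj Y)).inv ≫ (ε_ X Z ≫ ε R) ▷ R.obj Y ≫
            μ R (𝟙_ D) Y ≫ R.map (λ_ Y).hom := by
          try dsimp only [Functor.comp_obj, Functor.id_obj]
          rw [hev, inner_ev L R adj Z X (ε_ X Z)]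
      _ = (α_ Z X (R.obj Y)).inv ≫ ε_ X Z ▷ R.obj Y ≫ (λ_ (R.obj Y)).hom := by
          try dsimp only [Functor.comp_obj, Functor.id_obj]
          simp only [comp_whiskerRight, assoc]
          rw [← LaxMonoidal.left_unitality]
  refine ⟨(λ_ _).inv ≫ η_ X Z ▷ _ ≫ (α_ X Z _).hom ≫ X ◁ f, ?_, ?_⟩
  · calc (adj.unit.app X ▷ R.obj Y ≫ μ R (L.obj X) Y) ≫
          ((λ_ _).inv ≫ η_ X Z ▷ _ ≫ (α_ X Z _).hom ≫ X ◁ f)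
        = (λ_ (X ⊗ R.obj Y)).inv ≫ η_ X Z ▷ (X ⊗ R.obj Y) ≫ (α_ X Z (X ⊗ R.obj Y)).hom ≫
            X ◁ (Z ◁ (adj.unit.app X ▷ R.obj Y ≫ μ R (L.obj X) Y) ≫ f) := by
          try dsimp only [Functor.comp_obj, Functor.id_obj]
          rw [leftUnitor_inv_naturality_assoc, whisker_exchange_assoc,
            associator_naturality_right_assoc]
          simp only [MonoidalCategory.whiskerLeft_comp, assoc]
      _ = (λ_ (X ⊗ R.obj Y)).inv ≫ η_ X Z ▷ (X ⊗ R.obj Y) ≫ (α_ X Z (X ⊗ R.obj Y)).hom ≫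
            X ◁ ((α_ Z X (R.obj Y)).inv ≫ ε_ X Z ▷ R.obj Y ≫ (λ_ (R.obj Y)).hom) := by
          try dsimp only [Functor.comp_obj, Functor.id_obj]
          rw [keyA]
      _ = 𝟙 _ := coh2 (R.obj Y) X Z
  · have assocμ : R.obj (L.obj X) ◁ μ R (L.obj Z) (L.obj X ⊗ Y) ≫
        μ R (L.obj X) (L.obj Z ⊗ (L.obj X ⊗ Y)) =
        (α_ _ _ _).inv ≫ μ R (L.obj X) (L.obj Z) ▷ R.obj (L.obj X ⊗ Y) ≫
          μ R (L.obj X ⊗ L.obj Z) (L.obj X ⊗ Y) ≫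
          R.map (α_ (L.obj X) (L.obj Z) (L.obj X ⊗ Y)).hom := by
      rw [← cancel_mono (R.map (α_ (L.obj X) (L.obj Z) (L.obj X ⊗ Y)).inv)]
      simp only [assoc, ← R.map_comp, Iso.hom_inv_id, R.map_id, comp_id]
      exact LaxMonoidal.associativity_inv R _ _ _
    calc ((λ_ _).inv ≫ η_ X Z ▷ _ ≫ (α_ X Z _).hom ≫ X ◁ f) ≫
          (adj.unit.app X ▷ R.obj Y ≫ μ R (L.obj X) Y)
        = (λ_ _).inv ≫ η_ X Z ▷ _ ≫ (α_ X Z _).hom ≫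
            adj.unit.app X ▷ (Z ⊗ R.obj (L.obj X ⊗ Y)) ≫
            R.obj (L.obj X) ◁ (adj.unit.app Z ▷ R.obj (L.obj X ⊗ Y)) ≫
            (R.obj (L.obj X) ◁ μ R (L.obj Z) (L.obj X ⊗ Y) ≫
              μ R (L.obj X) (L.obj Z ⊗ (L.obj X ⊗ Y))) ≫
            R.map (L.obj X ◁ w) := by
          try dsimp only [Functor.comp_obj, Functor.id_obj]
          rw [assoc, assoc, assoc, whisker_exchange_assoc]
          simp only [hf, MonoidalCategory.whiskerLeft_comp, assoc]
          rw [μ_natural_right]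
      _ = (λ_ _).inv ≫
            (η_ X Z ≫ (adj.unit.app X ▷ Z ≫ R.obj (L.obj X) ◁ adj.unit.app Z ≫
              μ R (L.obj X) (L.obj Z))) ▷ R.obj (L.obj X ⊗ Y) ≫
            μ R (L.obj X ⊗ L.obj Z) (L.obj X ⊗ Y) ≫
            R.map ((α_ (L.obj X) (L.obj Z) (L.obj X ⊗ Y)).hom ≫ L.obj X ◁ w) := by
          try dsimp only [Functor.comp_obj, Functor.id_obj]
          rw [assocμ]
          rw [← whisker_exchange_assoc, ← associator_naturality_middle_assoc,
            ← associator_naturality_left_assoc]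
          simp only [comp_whiskerRight, assoc, Iso.hom_inv_id_assoc, R.map_comp]
          have hex : X ◁ adj.unit.app Z ≫ adj.unit.app X ▷ R.obj (L.obj Z) =
              adj.unit.app X ▷ Z ≫ R.obj (L.obj X) ◁ adj.unit.app Z :=
            whisker_exchange _ _
          simp only [← comp_whiskerRight_assoc]
          rw [reassoc_of% hex]
      _ = (λ_ _).inv ≫ ε R ▷ R.obj (L.obj X ⊗ Y) ≫
            R.map (η_ (L.obj X) (L.obj Z)) ▷ R.obj (L.obj X ⊗ Y) ≫
            μ R (L.obj X ⊗ L.obj Z) (L.obj X ⊗ Y) ≫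
            R.map ((α_ (L.obj X) (L.obj Z) (L.obj X ⊗ Y)).hom ≫ L.obj X ◁ w) := by
          try dsimp only [Functor.comp_obj, Functor.id_obj]
          rw [inner_coev L R adj X Z (η_ X Z), ← hcoev]
          simp only [comp_whiskerRight, assoc]
      _ = R.map ((λ_ (L.obj X ⊗ Y)).inv ≫ η_ (L.obj X) (L.obj Z) ▷ (L.obj X ⊗ Y) ≫
            (α_ (L.obj X) (L.obj Z) (L.obj X ⊗ Y)).hom ≫ L.obj X ◁ w) := by
          try dsimp only [Functor.comp_obj, Functor.id_obj]
          rw [μ_natural_left_assoc]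
          rw [LaxMonoidal.left_unitality_inv_assoc]
          simp only [R.map_comp, assoc]
      _ = 𝟙 _ := by
          try dsimp only [Functor.comp_obj, Functor.id_obj]
          rw [hw]
          rw [coh2 Y (L.obj X) (L.obj Z), R.map_id]

end Main

/-- Any monoidal adjunction `L ⊣ R` between rigid monoidal categories is a coHopf
adjunction: the coHopf operators
`h^l_{X,Y} = R₂(X, L(Y)) ∘ (id_{R(X)} ⊗ η_Y) : R(X) ⊗ Y ⟶ R(X ⊗ L(Y))` and
`h^r_{X,Y} = R₂(L(X), Y) ∘ (η_X ⊗ id_{R(Y)}) : X ⊗ R(Y) ⟶ R(L(X) ⊗ Y)`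
are invertible. -/
theorem monoidal_adjunction_between_rigid_is_coHopf
    {C : Type u₁} [Category.{v₁} C] [MonoidalCategory C] [RigidCategory C]
    {D : Type u₂} [Category.{v₂} D] [MonoidalCategory D] [RigidCategory D]
    (L : C ⥤ D) (R : D ⥤ C) (adj : L ⊣ R)
    [L.Monoidal] [R.LaxMonoidal] [adj.IsMonoidal] :
    (∀ (X : D) (Y : C),
      IsIso ((R.obj X ◁ adj.unit.app Y) ≫ μ R X (L.obj Y))) ∧
    (∀ (X : C) (Y : D),
      IsIso ((adj.unit.app X ▷ R.obj Y) ≫ μ R (L.obj X) Y)) := by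
  constructor
  · intro X Y
    exact isIso_left_coHopf L R adj X Y (ᘁY)
  · intro X Y
    exact isIso_right_coHopf L R adj X (Xᘁ) Y
end

section
/- Given a Frobenius monoidal functor F between monoidal categories and a Frobenius algebra (A, m, u, Δ, ν), the object F(A) with multiplication F(m) ∘ F₂(A,A), unit F(u) ∘ F₀, comultiplication F²(A,A) ∘ F(Δ), and counit F⁰ ∘ F(ν) is a Frobenius algebra. -/
open CategoryTheory Category MonoidalCategory Functor
open CategoryTheory.Functor.LaxMonoidal CategoryTheory.Functor.OplaxMonoidal

universe v₁ v₂ u₁ u₂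

variable (C : Type u₁) [Category.{v₁} C] [MonoidalCategory C]

/-- A Frobenius algebra structure on an object `A` of a monoidal category:
an algebra and a coalgebra structure on `A` satisfying the Frobenius law
`(m ⊗ id)(id ⊗ Δ) = Δ ∘ m = (id ⊗ m)(Δ ⊗ id)`. -/
structure FrobeniusAlgebraOn (A : C) where
  mul : A ⊗ A ⟶ A
  one : 𝟙_ C ⟶ A
  comul : A ⟶ A ⊗ A
  counit : A ⟶ 𝟙_ C
  mul_assoc : (mul ▷ A) ≫ mul = (α_ A A A).hom ≫ (A ◁ mul) ≫ mul
  one_mul : (one ▷ A) ≫ mul = (λ_ A).hom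
  mul_one : (A ◁ one) ≫ mul = (ρ_ A).hom
  comul_assoc : comul ≫ (A ◁ comul) = comul ≫ (comul ▷ A) ≫ (α_ A A A).hom
  comul_counit_left : comul ≫ (counit ▷ A) = (λ_ A).inv
  comul_counit_right : comul ≫ (A ◁ counit) = (ρ_ A).inv
  frobenius_left : (A ◁ comul) ≫ (α_ A A A).inv ≫ (mul ▷ A) = mul ≫ comul
  frobenius_right : (comul ▷ A) ≫ (α_ A A A).hom ≫ (A ◁ mul) = mul ≫ comul

variable {C}
variable {D : Type u₂} [Category.{v₂} D] [MonoidalCategory D]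

/-- The compatibility laws making a functor which is both lax and oplax monoidal
into a Frobenius monoidal functor. -/
def FrobeniusConditions (F : C ⥤ D) [F.LaxMonoidal] [F.OplaxMonoidal] : Prop :=
  (∀ X Y Z : C,
    (δ F X Y ▷ F.obj Z) ≫ (α_ (F.obj X) (F.obj Y) (F.obj Z)).hom ≫ (F.obj X ◁ μ F Y Z) =
      μ F (X ⊗ Y) Z ≫ F.map (α_ X Y Z).hom ≫ δ F X (Y ⊗ Z)) ∧
  (∀ X Y Z : C,
    (F.obj X ◁ δ F Y Z) ≫ (α_ (F.obj X) (F.obj Y) (F.obj Z)).inv ≫ (μ F X Y ▷ F.obj Z) =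
      μ F X (Y ⊗ Z) ≫ F.map (α_ X Y Z).inv ≫ δ F (X ⊗ Y) Z)

/-- A Frobenius monoidal functor sends Frobenius algebras to Frobenius algebras:
`F(A)` is a Frobenius algebra with multiplication `F(m) ∘ F₂(A,A)`, unit
`F(u) ∘ F₀`, comultiplication `F²(A,A) ∘ F(Δ)` and counit `F⁰ ∘ F(ν)`. -/
theorem frobenius_functor_preserves_frobenius_algebras
    (F : C ⥤ D) [F.LaxMonoidal] [F.OplaxMonoidal] (hF : FrobeniusConditions F)
    (A : C) (S : FrobeniusAlgebraOn C A) :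
    ∃ T : FrobeniusAlgebraOn D (F.obj A),
      T.mul = μ F A A ≫ F.map S.mul ∧
      T.one = ε F ≫ F.map S.one ∧
      T.comul = F.map S.comul ≫ δ F A A ∧
      T.counit = F.map S.counit ≫ η F := by
  obtain ⟨h1, h2⟩ := hF
  refine ⟨{
    mul := μ F A A ≫ F.map S.mul
    one := ε F ≫ F.map S.one
    comul := F.map S.comul ≫ δ F A A
    counit := F.map S.counit ≫ η F
    mul_assoc := ?_
    one_mul := ?_
    mul_one := ?_
    comul_assoc := ?_
    comul_counit_left := ?_
    comul_counit_right := ?_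
    frobenius_left := ?_
    frobenius_right := ?_ }, rfl, rfl, rfl, rfl⟩
  · simp only [comp_whiskerRight, MonoidalCategory.whiskerLeft_comp, assoc,
      μ_natural_left_assoc, μ_natural_right_assoc, ← F.map_comp]
    rw [S.mul_assoc]
    simp only [F.map_comp, ← LaxMonoidal.associativity_assoc, assoc]
  · simp only [comp_whiskerRight, assoc, μ_natural_left_assoc, ← F.map_comp, S.one_mul]
    rw [← LaxMonoidal.left_unitality]
  · simp only [MonoidalCategory.whiskerLeft_comp, assoc, μ_natural_right_assoc,
      ← F.map_comp, S.mul_one]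
    rw [← LaxMonoidal.right_unitality]
  · have hc : S.comul ≫ (A ◁ S.comul) = S.comul ≫ (S.comul ▷ A) ≫ (α_ A A A).hom :=
      S.comul_assoc
    simp only [MonoidalCategory.whiskerLeft_comp, comp_whiskerRight, assoc,
      δ_natural_right_assoc, δ_natural_left_assoc]
    rw [OplaxMonoidal.associativity]
    simp only [← F.map_comp_assoc, ← assoc]
    rw [← assoc] at hc
    rw [hc]
  · simp only [comp_whiskerRight, assoc]
    rw [δ_natural_left_assoc, ← F.map_comp_assoc,
      S.comul_counit_left, OplaxMonoidal.left_unitality]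
  · simp only [MonoidalCategory.whiskerLeft_comp, assoc]
    rw [δ_natural_right_assoc, ← F.map_comp_assoc,
      S.comul_counit_right, OplaxMonoidal.right_unitality]
  · simp only [MonoidalCategory.whiskerLeft_comp, comp_whiskerRight, assoc]
    slice_lhs 2 4 => rw [h2 A A A]
    simp only [assoc]
    rw [μ_natural_right_assoc, δ_natural_left]
    simp only [← F.map_comp_assoc]
    rw [S.frobenius_left]
  · simp only [MonoidalCategory.whiskerLeft_comp, comp_whiskerRight, assoc]
    slice_lhs 2 4 => rw [h1 A A A]
    simp only [assoc]
    rw [μ_natural_left_assoc, δ_natural_right]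
    simp only [← F.map_comp_assoc]
    rw [S.frobenius_right]
end

section
/- Let U ⊣ R be a monoidal adjunction between monoidal categories with unit η^r, counit ε^r, where R has lax structure R₂, and let h^l_{X,M} = R₂(X, U(M)) ∘ (id_{R(X)} ⊗ η^r_M) be the left coHopf operator. Then: (a) R₂(X, Y ⊗ UR(Z)) ∘ (id_{R(X)} ⊗ h^l_{Y,R(Z)}) = h^l_{X⊗Y, R(Z)} ∘ (R₂(X,Y) ⊗ id_{R(Z)}); (c) R(id_X ⊗ ε^r_Y) ∘ h^l_{X,R(Y)} = R₂(X,Y). -/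
open CategoryTheory Category MonoidalCategory Functor
open CategoryTheory.Functor.LaxMonoidal

universe v₁ v₂ u₁ u₂

variable {C : Type u₁} [Category.{v₁} C] [MonoidalCategory C]
variable {D : Type u₂} [Category.{v₂} D] [MonoidalCategory D]

def coHopfL (U : C ⥤ D) (R : D ⥤ C) (adj : U ⊣ R) [R.LaxMonoidal]
    (X : D) (M : C) : R.obj X ⊗ M ⟶ R.obj (X ⊗ U.obj M) :=
  (R.obj X ◁ adj.unit.app M) ≫ μ R X (U.obj M)

/-- Identities (a) and (c) of the left coHopf operator of a monoidal adjunction: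
(a) `R₂(X, Y ⊗ UR(Z)) ∘ (id_{R(X)} ⊗ h^l_{Y,R(Z)}) = h^l_{X⊗Y,R(Z)} ∘ (R₂(X,Y) ⊗ id_{R(Z)})`
(with the structural associators inserted), and
(c) `R(id_X ⊗ ε^r_Y) ∘ h^l_{X,R(Y)} = R₂(X,Y)`. -/
theorem coHopf_operator_identities
    (U : C ⥤ D) (R : D ⥤ C) (adj : U ⊣ R)
    [U.Monoidal] [R.LaxMonoidal] [adj.IsMonoidal] :
    (∀ X Y Z : D,
      (α_ (R.obj X) (R.obj Y) (R.obj Z)).hom ≫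
          (R.obj X ◁ coHopfL U R adj Y (R.obj Z)) ≫ μ R X (Y ⊗ U.obj (R.obj Z)) =
        (μ R X Y ▷ R.obj Z) ≫ coHopfL U R adj (X ⊗ Y) (R.obj Z) ≫
          R.map (α_ X Y (U.obj (R.obj Z))).hom) ∧
    (∀ X Y : D,
      coHopfL U R adj X (R.obj Y) ≫ R.map (X ◁ adj.counit.app Y) = μ R X Y) := by
  constructor
  · intro X Y Z
    simp only [coHopfL, MonoidalCategory.whiskerLeft_comp, comp_whiskerRight, assoc]
    rw [← associator_naturality_right_assoc]
    simp only [Functor.comp_obj]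
    rw [← associativity, whisker_exchange_assoc]
  · intro X Y
    simp only [coHopfL, assoc]
    rw [← μ_natural_right, ← MonoidalCategory.whiskerLeft_comp_assoc,
      adj.right_triangle_components, MonoidalCategory.whiskerLeft_id, id_comp]
    rfl
end
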